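/- If preferences are single-peaked and k ≥ ⌈m/2⌉, then any Bloc-voting winning set (with each winner having strictly more approvals than each non-winner) is Gehrlein-stable. -/
import Mathlib


open Finset

/-- Each voter's preference is a strict total (linear) order on the candidates. -/
def StrictPrefs {m N : ℕ} (P : Fin N → Fin m → Fin m → Prop) : Prop :=
  ∀ v : Fin N, IsStrictTotalOrder (Fin m) (P v)

/-- Single-peakedness w.r.t. the left-right order on `Fin m`: for `i < j < k`,
no voter ranks both `C_i` and `C_k` above `C_j`. -/
def SinglePeaked {m N : ℕ} (P : Fin N → Fin m → Fin m → Prop) : Prop :=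
  ∀ (v : Fin N) (i j k : Fin m), i < j → j < k → ¬ (P v i j ∧ P v k j)

/-- Number of voters preferring `a` to `b`. -/
def prefCount {m N : ℕ} (P : Fin N → Fin m → Fin m → Prop)
    [∀ v a b, Decidable (P v a b)] (a b : Fin m) : ℕ :=
  (univ.filter fun v => P v a b).card

/-- `a` majority-defeats `b`: strictly more than `N/2` voters prefer `a` to `b`. -/
def Defeats {m N : ℕ} (P : Fin N → Fin m → Fin m → Prop)
    [∀ v a b, Decidable (P v a b)] (a b : Fin m) : Prop :=
  2 * prefCount P a b > N

instance {m N : ℕ} (P : Fin N → Fin m → Fin m → Prop)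
    [∀ v a b, Decidable (P v a b)] (a b : Fin m) : Decidable (Defeats P a b) :=
  inferInstanceAs (Decidable (2 * prefCount P a b > N))

/-- Voter `v` approves candidate `a` under Bloc voting with `k` winners:
`a` is among `v`'s top `k` candidates. -/
def Approves {m N : ℕ} (P : Fin N → Fin m → Fin m → Prop)
    [∀ v a b, Decidable (P v a b)] (k : ℕ) (v : Fin N) (a : Fin m) : Prop :=
  (univ.filter fun b => P v b a).card < k

instance {m N : ℕ} (P : Fin N → Fin m → Fin m → Prop)
    [∀ v a b, Decidable (P v a b)] (k : ℕ) (v : Fin N) (a : Fin m) :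
    Decidable (Approves P k v a) :=
  inferInstanceAs (Decidable ((univ.filter fun b => P v b a).card < k))

/-- Bloc score of candidate `a`: the number of voters who approve `a`. -/
def blocScore {m N : ℕ} (P : Fin N → Fin m → Fin m → Prop)
    [∀ v a b, Decidable (P v a b)] (k : ℕ) (a : Fin m) : ℕ :=
  (univ.filter fun v => Approves P k v a).card

/-- `W` is a winning set under Bloc voting with `k` winners (strict vote totals):
`W` has `k` members and each member has strictly more approvals than each non-member. -/
def IsWinningSet {m N : ℕ} (P : Fin N → Fin m → Fin m → Prop)
    [∀ v a b, Decidable (P v a b)] (k : ℕ) (W : Finset (Fin m)) : Prop :=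
  W.card = k ∧ ∀ w ∈ W, ∀ c ∉ W, blocScore P k w > blocScore P k c

section Aux
set_option linter.unusedSectionVars false

open Finset

variable {m N : ℕ} (P : Fin N → Fin m → Fin m → Prop) [∀ v a b, Decidable (P v a b)]

/-- rank of candidate `a` in voter `v`'s ordering: number of candidates preferred to `a`. -/
def rk (v : Fin N) (a : Fin m) : ℕ := (univ.filter fun b => P v b a).card

lemma approves_iff_rk {k : ℕ} {v : Fin N} {a : Fin m} :
    Approves P k v a ↔ rk P v a < k := Iff.rfl

variable {P}

lemma rk_lt_rk (hP : StrictPrefs P) {v : Fin N} {a b : Fin m} (h : P v a b) :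
    rk P v a < rk P v b := by
  haveI := hP v
  apply card_lt_card
  constructor
  · intro x hx
    simp only [mem_filter, mem_univ, true_and] at hx ⊢
    exact trans_of (P v) hx h
  · intro hsub
    have ha : a ∈ univ.filter fun x => P v x b := by
      simp only [mem_filter, mem_univ, true_and]; exact h
    have := hsub ha
    simp only [mem_filter, mem_univ, true_and] at this
    exact irrefl_of (P v) a this

lemma pv_of_not {v : Fin N} (hP : StrictPrefs P) {a b : Fin m} (hne : a ≠ b)
    (h : ¬ P v a b) : P v b a := by
  haveI := hP v
  rcases trichotomous_of (P v) a b with h1 | h1 | h1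
  · exact absurd h1 h
  · exact absurd h1 hne
  · exact h1

lemma rk_lt_m (hP : StrictPrefs P) (v : Fin N) (a : Fin m) : rk P v a < m := by
  haveI := hP v
  have hsub : (univ.filter fun b => P v b a) ⊆ univ.erase a := by
    intro b hb
    simp only [mem_filter, mem_univ, true_and] at hb
    refine mem_erase.2 ⟨?_, mem_univ b⟩
    rintro rfl; exact irrefl_of (P v) _ hb
  have h1 : rk P v a ≤ (univ.erase a).card := card_le_card hsub
  rw [card_erase_of_mem (mem_univ a), card_univ, Fintype.card_fin] at h1
  have hm : 1 ≤ m := a.pos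
  omega

lemma rk_injective (hP : StrictPrefs P) (v : Fin N) :
    Function.Injective (rk P v) := by
  haveI := hP v
  intro a b hab
  by_contra hne
  rcases trichotomous_of (P v) a b with h1 | h1 | h1
  · exact absurd hab (Nat.ne_of_lt (rk_lt_rk hP h1))
  · exact hne h1
  · exact absurd hab.symm (Nat.ne_of_lt (rk_lt_rk hP h1))

/-- helper: filtering `Fin m` by a predicate on values has the same card as filtering `range m`. -/
lemma card_fin_filter (p : ℕ → Prop) [DecidablePred p] :
    (univ.filter fun x : Fin m => p x.val).card = ((Finset.range m).filter p).card := by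
  apply card_bij (fun x _ => x.val)
  · intro a ha
    simp only [mem_filter, mem_univ, true_and] at ha
    simp only [mem_filter, mem_range]
    exact ⟨a.isLt, ha⟩
  · intro a _ b _ h
    exact Fin.val_injective h
  · intro j hj
    simp only [mem_filter, mem_range] at hj
    exact ⟨⟨j, hj.1⟩, by simp only [mem_filter, mem_univ, true_and]; exact hj.2, rfl⟩

/-- Each voter approves exactly `k` candidates (when `k ≤ m`). -/
lemma card_topk (hP : StrictPrefs P) (v : Fin N) {k : ℕ} (hkm : k ≤ m) :
    (univ.filter fun a : Fin m => rk P v a < k).card = k := by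
  have himg : univ.image (rk P v) = Finset.range m := by
    apply eq_of_subset_of_card_le
    · intro j hj
      simp only [mem_image, mem_univ, true_and] at hj
      obtain ⟨a, rfl⟩ := hj
      exact mem_range.2 (rk_lt_m hP v a)
    · rw [card_range, card_image_of_injective _ (rk_injective hP v), card_univ,
        Fintype.card_fin]
  have h1 : (univ.filter fun a : Fin m => rk P v a < k).card
      = ((Finset.range m).filter fun j => j < k).card := by
    apply card_bij (fun a _ => rk P v a)
    · intro a ha
      simp only [mem_filter, mem_univ, true_and] at ha
      simp only [mem_filter, mem_range]
      exact ⟨rk_lt_m hP v a, ha⟩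
    · intro a _ b _ h
      exact rk_injective hP v h
    · intro j hj
      simp only [mem_filter, mem_range] at hj
      have : j ∈ univ.image (rk P v) := himg ▸ mem_range.2 hj.1
      simp only [mem_image, mem_univ, true_and] at this
      obtain ⟨a, ha⟩ := this
      exact ⟨a, by simp only [mem_filter, mem_univ, true_and]; omega, ha⟩
  rw [h1]
  have h2 : ((Finset.range m).filter fun j => j < k) = Finset.range k := by
    ext j
    simp only [mem_filter, mem_range]
    omega
  rw [h2, card_range]

/-- Top-`k` sets are convex. -/
lemma topk_convex (hP : StrictPrefs P) (hSP : SinglePeaked P) {v : Fin N} {k : ℕ}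
    {a x b : Fin m} (hax : a < x) (hxb : x < b)
    (ha : rk P v a < k) (hb : rk P v b < k) : rk P v x < k := by
  have h := hSP v a x b hax hxb
  rcases Decidable.not_and_iff_or_not.mp h with h1 | h1
  · have := rk_lt_rk hP (pv_of_not hP (ne_of_lt hax) h1)
    omega
  · have := rk_lt_rk hP (pv_of_not hP (ne_of_lt hxb).symm h1)
    omega

/-- Width bound: two approved candidates are less than `k` apart. -/
lemma topk_width (hP : StrictPrefs P) (hSP : SinglePeaked P) {v : Fin N} {k : ℕ}
    (hkm : k ≤ m) {a b : Fin m} (hab : a ≤ b)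
    (ha : rk P v a < k) (hb : rk P v b < k) : (b : ℕ) < (a : ℕ) + k := by
  have hsub : Icc a b ⊆ univ.filter fun x : Fin m => rk P v x < k := by
    intro x hx
    rw [mem_Icc] at hx
    simp only [mem_filter, mem_univ, true_and]
    rcases eq_or_lt_of_le hx.1 with h1 | h1
    · exact h1 ▸ ha
    rcases eq_or_lt_of_le hx.2 with h2 | h2
    · exact h2 ▸ hb
    exact topk_convex hP hSP h1 h2 ha hb
  have h1 := card_le_card hsub
  rw [card_topk hP v hkm, Fin.card_Icc] at h1
  have : (a : ℕ) ≤ (b : ℕ) := hab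
  omega

/-- Pair lemma: if `d = a + k`, a voter approves `a` iff they do not approve `d`. -/
lemma pair_lemma (hP : StrictPrefs P) (hSP : SinglePeaked P) {v : Fin N} {k : ℕ}
    (hkm : k ≤ m) (hm2k : m ≤ 2 * k) (hk1 : 1 ≤ k) {a d : Fin m}
    (hd : (d : ℕ) = (a : ℕ) + k) :
    rk P v a < k ↔ ¬ rk P v d < k := by
  have had : a < d := by rw [Fin.lt_def]; omega
  constructor
  · intro ha hdk
    have := topk_width hP hSP hkm (le_of_lt had) ha hdk
    omega
  · intro hnd
    by_contra hna
    have hTcard := card_topk hP v hkm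
    set T := univ.filter fun x : Fin m => rk P v x < k with hT
    have hmemT : ∀ x : Fin m, x ∈ T ↔ rk P v x < k := by
      intro x; simp [hT]
    have haT : a ∉ T := by rw [hmemT]; exact hna
    have hdT : d ∉ T := by rw [hmemT]; exact hnd
    have hda : (d : ℕ) < m := d.isLt
    -- split relative to a
    have hsplitA : (∀ x ∈ T, x < a) ∨ (∀ x ∈ T, a < x) := by
      by_contra hc
      push_neg at hc
      obtain ⟨⟨x, hx, hxa⟩, ⟨y, hy, hya⟩⟩ := hc
      have hxa' : a < x := lt_of_le_of_ne hxa (fun h => haT (h ▸ hx))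
      have hya' : y < a := lt_of_le_of_ne hya (fun h => haT (h.symm ▸ hy))
      exact haT ((hmemT a).2 (topk_convex hP hSP hya' hxa'
        ((hmemT y).1 hy) ((hmemT x).1 hx)))
    rcases hsplitA with hall | hall
    · -- all approved candidates below a : at most a.val < k of them
      have hsub : T ⊆ univ.filter fun x : Fin m => x.val < a.val := by
        intro x hx
        simp only [mem_filter, mem_univ, true_and]
        exact hall x hx
      have h1 := card_le_card hsub
      rw [hTcard, card_fin_filter (fun j => j < (a : ℕ))] at h1
      have h2 : ((Finset.range m).filter fun j => j < (a : ℕ)) = Finset.range (a : ℕ) := by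
        ext j; simp only [mem_filter, mem_range]; omega
      rw [h2, card_range] at h1
      omega
    · -- all above a; split relative to d
      have hsplitD : (∀ x ∈ T, x < d) ∨ (∀ x ∈ T, d < x) := by
        by_contra hc
        push_neg at hc
        obtain ⟨⟨x, hx, hxd⟩, ⟨y, hy, hyd⟩⟩ := hc
        have hxd' : d < x := lt_of_le_of_ne hxd (fun h => hdT (h ▸ hx))
        have hyd' : y < d := lt_of_le_of_ne hyd (fun h => hdT (h.symm ▸ hy))
        exact hdT ((hmemT d).2 (topk_convex hP hSP hyd' hxd'
          ((hmemT y).1 hy) ((hmemT x).1 hx)))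
      rcases hsplitD with hall2 | hall2
      · -- all strictly between a and d : at most k-1 of them
        have hsub : T ⊆ univ.filter fun x : Fin m => (a : ℕ) < x.val ∧ x.val < (d : ℕ) := by
          intro x hx
          simp only [mem_filter, mem_univ, true_and]
          exact ⟨hall x hx, hall2 x hx⟩
        have h1 := card_le_card hsub
        rw [hTcard, card_fin_filter (fun j => (a : ℕ) < j ∧ j < (d : ℕ))] at h1
        have h2 : ((Finset.range m).filter fun j => (a : ℕ) < j ∧ j < (d : ℕ))
            = Finset.Ioo (a : ℕ) (d : ℕ) := by
          ext j; simp only [mem_filter, mem_range, Finset.mem_Ioo]; omega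
        rw [h2, Nat.card_Ioo] at h1
        omega
      · -- all above d : at most m-1-d.val < k of them
        have hsub : T ⊆ univ.filter fun x : Fin m => (d : ℕ) < x.val := by
          intro x hx
          simp only [mem_filter, mem_univ, true_and]
          exact hall2 x hx
        have h1 := card_le_card hsub
        rw [hTcard, card_fin_filter (fun j => (d : ℕ) < j)] at h1
        have h2 : ((Finset.range m).filter fun j => (d : ℕ) < j)
            = Finset.Ioo (d : ℕ) m := by
          ext j; simp only [mem_filter, mem_range, Finset.mem_Ioo]; omega
        rw [h2, Nat.card_Ioo] at h1
        omega

end Aux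

/-- If `k ≥ ⌈m/2⌉`, any Bloc-voting winning set is Gehrlein-stable. -/
theorem bloc_winning_set_gehrlein_stable_of_large_k {m N : ℕ}
    (P : Fin N → Fin m → Fin m → Prop) [∀ v a b, Decidable (P v a b)]
    (hP : StrictPrefs P) (hSP : SinglePeaked P) (hN : Odd N)
    (k : ℕ) (hk : (m + 1) / 2 ≤ k)
    (W : Finset (Fin m)) (hW : IsWinningSet P k W) :
    ∀ w ∈ W, ∀ c ∉ W, Defeats P w c := by
  obtain ⟨hWcard, hWwin⟩ := hW
  intro w hw c hc
  have hm2k : m ≤ 2 * k := by omega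
  have hk1 : 1 ≤ k := hWcard ▸ card_pos.2 ⟨w, hw⟩
  have hkm : k ≤ m := by
    have := card_le_univ W
    rw [hWcard, Fintype.card_fin] at this
    exact this
  have hWne : W.Nonempty := ⟨w, hw⟩
  set t := W.min' hWne with htdef
  set e := W.max' hWne with hedef
  have ht : t ∈ W := W.min'_mem hWne
  have he : e ∈ W := W.max'_mem hWne
  -- W is convex
  have hconv : ∀ x y z : Fin m, x ∈ W → z ∈ W → x < y → y < z → y ∈ W := by
    intro x y z hx hz hxy hyz
    by_contra hy
    have hxy' : blocScore P k x > blocScore P k y := hWwin x hx y hy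
    have hzy' : blocScore P k z > blocScore P k y := hWwin z hz y hy
    -- some voter approves x but not y
    have hU : ∃ u : Fin N, Approves P k u x ∧ ¬ Approves P k u y := by
      by_contra hcon
      push_neg at hcon
      have hsub : (univ.filter fun v => Approves P k v x)
          ⊆ univ.filter fun v => Approves P k v y := by
        intro v hv
        simp only [mem_filter, mem_univ, true_and] at hv ⊢
        exact hcon v hv
      have := card_le_card hsub
      unfold blocScore at hxy'
      omega
    have hV : ∃ u : Fin N, Approves P k u z ∧ ¬ Approves P k u y := by
      by_contra hcon
      push_neg at hcon
      have hsub : (univ.filter fun v => Approves P k v z)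
          ⊆ univ.filter fun v => Approves P k v y := by
        intro v hv
        simp only [mem_filter, mem_univ, true_and] at hv ⊢
        exact hcon v hv
      have := card_le_card hsub
      unfold blocScore at hzy'
      omega
    obtain ⟨u, hux, huy⟩ := hU
    obtain ⟨u', huz, huy'⟩ := hV
    rw [approves_iff_rk] at hux huy huz huy'
    -- all of u's approved candidates are < y
    have h1 : (univ.filter fun a : Fin m => rk P u a < k)
        ⊆ univ.filter fun a : Fin m => a.val < y.val := by
      intro s hs
      simp only [mem_filter, mem_univ, true_and] at hs ⊢
      rcases lt_trichotomy s y with h | h | h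
      · exact h
      · exact absurd (h ▸ hs) huy
      · exact absurd (topk_convex hP hSP hxy h hux hs) huy
    have h1' := card_le_card h1
    rw [card_topk hP u hkm, card_fin_filter (fun j => j < (y : ℕ))] at h1'
    have h1'' : ((Finset.range m).filter fun j => j < (y : ℕ)) = Finset.range (y : ℕ) := by
      ext j; simp only [mem_filter, mem_range]; omega
    rw [h1'', card_range] at h1'
    -- all of u''s approved candidates are > y
    have h2 : (univ.filter fun a : Fin m => rk P u' a < k)
        ⊆ univ.filter fun a : Fin m => y.val < a.val := by
      intro s hs
      simp only [mem_filter, mem_univ, true_and] at hs ⊢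
      rcases lt_trichotomy s y with h | h | h
      · exact absurd (topk_convex hP hSP h hyz hs huz) huy'
      · exact absurd (h ▸ hs) huy'
      · exact h
    have h2' := card_le_card h2
    rw [card_topk hP u' hkm, card_fin_filter (fun j => (y : ℕ) < j)] at h2'
    have h2'' : ((Finset.range m).filter fun j => (y : ℕ) < j)
        = Finset.Ioo (y : ℕ) m := by
      ext j; simp only [mem_filter, mem_range, Finset.mem_Ioo]; omega
    rw [h2'', Nat.card_Ioo] at h2'
    have := y.isLt
    omega
  -- the endpoints are exactly k-1 apart
  have hIccW : Icc t e ⊆ W := by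
    intro x hx
    rw [mem_Icc] at hx
    rcases eq_or_lt_of_le hx.1 with h1 | h1
    · exact h1 ▸ ht
    rcases eq_or_lt_of_le hx.2 with h2 | h2
    · exact h2 ▸ he
    exact hconv t x e ht he h1 h2
  have hte : (e : ℕ) + 1 = (t : ℕ) + k := by
    have h1 : (Icc t e).card ≤ k := hWcard ▸ card_le_card hIccW
    have h2 : W ⊆ Icc t e := fun x hx => mem_Icc.2 ⟨W.min'_le x hx, W.le_max' x hx⟩
    have h3 : k ≤ (Icc t e).card := hWcard ▸ card_le_card h2
    rw [Fin.card_Icc] at h1 h3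
    have hte' : (t : ℕ) ≤ (e : ℕ) := W.min'_le e he
    omega
  have hwt : t ≤ w := W.min'_le w hw
  have hwe : w ≤ e := W.le_max' w hw
  have hcte : c < t ∨ e < c := by
    by_contra hcon
    push_neg at hcon
    exact hc (hIccW (mem_Icc.2 ⟨hcon.1, hcon.2⟩))
  have hwc : w ≠ c := fun h => hc (h ▸ hw)
  -- preference counts partition the voters
  have hsum : prefCount P w c + prefCount P c w = N := by
    have hfilt : (univ.filter fun v : Fin N => ¬ P v w c)
        = univ.filter fun v : Fin N => P v c w := by
      ext v
      simp only [mem_filter, mem_univ, true_and]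
      haveI := hP v
      constructor
      · exact fun h => pv_of_not hP hwc h
      · intro h hcon
        exact irrefl_of (P v) w (trans_of (P v) hcon h)
    have := card_filter_add_card_filter_not (s := (univ : Finset (Fin N)))
      (p := fun v => P v w c)
    rw [hfilt] at this
    rw [card_univ, Fintype.card_fin] at this
    exact this
  rcases hcte with hcase | hcase
  · -- c is to the left of W ; use e and its partner t-1
    have ht1 : 1 ≤ (t : ℕ) := by
      have : (c : ℕ) < (t : ℕ) := hcase
      omega
    have hd : (t : ℕ) - 1 < m := by omega
    set d : Fin m := ⟨(t : ℕ) - 1, hd⟩ with hddef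
    have hdW : d ∉ W := by
      intro hmem
      have := W.min'_le d hmem
      rw [Fin.le_def] at this
      simp only [hddef] at this
      omega
    have hscore : blocScore P k e > blocScore P k d := hWwin e he d hdW
    have hpair : ∀ v : Fin N, rk P v d < k ↔ ¬ rk P v e < k := by
      intro v
      exact pair_lemma hP hSP hkm hm2k hk1 (by simp only [hddef]; omega)
    have hsum2 : blocScore P k d + blocScore P k e = N := by
      have hfilt : (univ.filter fun v : Fin N => ¬ Approves P k v d)
          = univ.filter fun v : Fin N => Approves P k v e := by
        ext v
        simp only [mem_filter, mem_univ, true_and, approves_iff_rk]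
        rw [hpair v]
        tauto
      have := card_filter_add_card_filter_not (s := (univ : Finset (Fin N)))
        (p := fun v => Approves P k v d)
      rw [hfilt, card_univ, Fintype.card_fin] at this
      exact this
    -- voters preferring c to w do not approve e
    have hM : (univ.filter fun v : Fin N => P v c w)
        ⊆ univ.filter fun v : Fin N => ¬ Approves P k v e := by
      intro v hv
      simp only [mem_filter, mem_univ, true_and, approves_iff_rk] at hv ⊢
      intro he'
      have hcw : c < w := lt_of_lt_of_le hcase hwt
      have hcrk : rk P v c < k := by
        rcases eq_or_lt_of_le hwe with h | h
        · have h5 := rk_lt_rk hP hv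
          rw [h] at h5
          omega
        · have h3 := hSP v c w e hcw h
          have hwe' : P v w e := pv_of_not hP (ne_of_lt h).symm
            (fun hcon => h3 ⟨hv, hcon⟩)
          have h4 := rk_lt_rk hP hwe'
          have h5 := rk_lt_rk hP hv
          omega
      have hwidth := topk_width hP hSP hkm (le_of_lt (lt_of_lt_of_le hcw hwe)) hcrk he'
      have : (c : ℕ) < (t : ℕ) := hcase
      omega
    have hMcard : prefCount P c w ≤ (univ.filter fun v : Fin N => ¬ Approves P k v e).card :=
      card_le_card hM
    have hneg : blocScore P k e + (univ.filter fun v : Fin N => ¬ Approves P k v e).card = N := by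
      have := card_filter_add_card_filter_not (s := (univ : Finset (Fin N)))
        (p := fun v => Approves P k v e)
      rw [card_univ, Fintype.card_fin] at this
      exact this
    show 2 * prefCount P w c > N
    omega
  · -- c is to the right of W ; use t and its partner t+k
    have hck : (t : ℕ) + k ≤ (c : ℕ) := by
      have : (e : ℕ) < (c : ℕ) := hcase
      omega
    have hdm : (t : ℕ) + k < m := lt_of_le_of_lt hck c.isLt
    set d : Fin m := ⟨(t : ℕ) + k, hdm⟩ with hddef
    have hdW : d ∉ W := by
      intro hmem
      have := W.le_max' d hmem
      rw [Fin.le_def] at this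
      simp only [hddef] at this
      omega
    have hscore : blocScore P k t > blocScore P k d := hWwin t ht d hdW
    have hpair : ∀ v : Fin N, rk P v t < k ↔ ¬ rk P v d < k := by
      intro v
      exact pair_lemma hP hSP hkm hm2k hk1 (by simp only [hddef])
    have hsum2 : blocScore P k t + blocScore P k d = N := by
      have hfilt : (univ.filter fun v : Fin N => ¬ Approves P k v t)
          = univ.filter fun v : Fin N => Approves P k v d := by
        ext v
        simp only [mem_filter, mem_univ, true_and, approves_iff_rk]
        rw [hpair v]
        tauto
      have := card_filter_add_card_filter_not (s := (univ : Finset (Fin N)))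
        (p := fun v => Approves P k v t)
      rw [hfilt, card_univ, Fintype.card_fin] at this
      exact this
    -- voters preferring c to w do not approve t
    have hM : (univ.filter fun v : Fin N => P v c w)
        ⊆ univ.filter fun v : Fin N => ¬ Approves P k v t := by
      intro v hv
      simp only [mem_filter, mem_univ, true_and, approves_iff_rk] at hv ⊢
      intro ht'
      have hwc' : w < c := lt_of_le_of_lt hwe hcase
      have hcrk : rk P v c < k := by
        rcases eq_or_lt_of_le hwt with h | h
        · have h5 := rk_lt_rk hP hv
          rw [← h] at h5
          omega
        · have h3 := hSP v t w c h hwc'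
          have hwt' : P v w t := pv_of_not hP (ne_of_lt h)
            (fun hcon => h3 ⟨hcon, hv⟩)
          have h4 := rk_lt_rk hP hwt'
          have h5 := rk_lt_rk hP hv
          omega
      have htc : t ≤ c := Fin.le_def.2 (by omega)
      have hwidth := topk_width hP hSP hkm htc ht' hcrk
      omega
    have hMcard : prefCount P c w ≤ (univ.filter fun v : Fin N => ¬ Approves P k v t).card :=
      card_le_card hM
    have hneg : blocScore P k t + (univ.filter fun v : Fin N => ¬ Approves P k v t).card = N := by
      have := card_filter_add_card_filter_not (s := (univ : Finset (Fin N)))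
        (p := fun v => Approves P k v t)
      rw [card_univ, Fintype.card_fin] at this
      exact this
    show 2 * prefCount P w c > N
    omega
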